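/- Let Λ be the set of sparsest solutions of: minimize ‖x‖₀ subject to ‖y − Ax‖₂ ≤ ε, Bx ≤ b, and suppose Λ is nonempty and bounded. Then there exists γ* > 0 such that for every x ∈ Λ and every i ∈ supp(x), |x_i| ≥ γ*. -/

import Mathlib

open Matrix Finset

/-- The ℓ₂ norm of a finite real vector. -/
noncomputable def l2 {ι : Type*} [Fintype ι] (v : ι → ℝ) : ℝ := Real.sqrt (∑ i, v i ^ 2)

/-- The ℓ₀ "norm": number of nonzero components. -/
noncomputable def l0 {n : ℕ} (x : Fin n → ℝ) : ℕ :=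
  (Finset.univ.filter fun i => x i ≠ 0).card

/-- The support of a vector as a finset. -/
noncomputable def spt {n : ℕ} (x : Fin n → ℝ) : Finset (Fin n) :=
  Finset.univ.filter fun i => x i ≠ 0

/-- Membership in the feasible set T = {x : ‖y - Ax‖₂ ≤ ε, Bx ≤ b}. -/
def feasible {m l n : ℕ} (A : Matrix (Fin m) (Fin n) ℝ) (B : Matrix (Fin l) (Fin n) ℝ)
    (y : Fin m → ℝ) (b : Fin l → ℝ) (ε : ℝ) (x : Fin n → ℝ) : Prop :=
  l2 (y - A.mulVec x) ≤ ε ∧ ∀ i, B.mulVec x i ≤ b i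

/-- x is a sparsest solution: feasible and minimizing ‖·‖₀ over T. -/
noncomputable def sparsest {m l n : ℕ} (A : Matrix (Fin m) (Fin n) ℝ)
    (B : Matrix (Fin l) (Fin n) ℝ) (y : Fin m → ℝ) (b : Fin l → ℝ) (ε : ℝ)
    (x : Fin n → ℝ) : Prop :=
  feasible A B y b ε x ∧ ∀ z, feasible A B y b ε z → l0 x ≤ l0 z

/-- Column submatrix indexed by S. -/
def colSub {m n : ℕ} (A : Matrix (Fin m) (Fin n) ℝ) (S : Finset (Fin n)) :
    Matrix (Fin m) {j // j ∈ S} ℝ :=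
  A.submatrix id Subtype.val

/-- Row-and-column submatrix with rows in I and columns in S. -/
def rcSub {l n : ℕ} (B : Matrix (Fin l) (Fin n) ℝ) (I : Finset (Fin l))
    (S : Finset (Fin n)) : Matrix {i // i ∈ I} {j // j ∈ S} ℝ :=
  B.submatrix Subtype.val Subtype.val

/-- Active index set of the constraints Bx ≤ b at x. -/
noncomputable def activeSet {l n : ℕ} (B : Matrix (Fin l) (Fin n) ℝ) (b : Fin l → ℝ)
    (x : Fin n → ℝ) : Finset (Fin l) :=
  Finset.univ.filter fun i => B.mulVec x i = b i

lemma mulVec_cont {m n : ℕ} (A : Matrix (Fin m) (Fin n) ℝ) (i : Fin m) :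
    Continuous fun x : Fin n → ℝ => A.mulVec x i := by
  simp only [Matrix.mulVec, dotProduct]
  exact continuous_finset_sum _ fun j _ => (continuous_const.mul (continuous_apply j))

lemma feasible_closed {m l n : ℕ} (A : Matrix (Fin m) (Fin n) ℝ)
    (B : Matrix (Fin l) (Fin n) ℝ) (y : Fin m → ℝ) (b : Fin l → ℝ) (ε : ℝ) :
    IsClosed {x : Fin n → ℝ | feasible A B y b ε x} := by
  have h1 : Continuous fun x : Fin n → ℝ => l2 (y - A.mulVec x) := by
    unfold l2
    exact Real.continuous_sqrt.comp <| continuous_finset_sum _ fun i _ => by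
      simpa using (show Continuous fun x : Fin n → ℝ => (y i - A.mulVec x i) ^ 2 from
        (continuous_const.sub (mulVec_cont A i)).pow 2)
  have : {x : Fin n → ℝ | feasible A B y b ε x} =
      {x | l2 (y - A.mulVec x) ≤ ε} ∩ ⋂ i, {x | B.mulVec x i ≤ b i} := by
    ext x; simp [feasible, Set.mem_iInter]
  rw [this]
  exact (isClosed_le h1 continuous_const).inter <| isClosed_iInter fun i =>
    isClosed_le (mulVec_cont B i) continuous_const

lemma key {m l n : ℕ} (A : Matrix (Fin m) (Fin n) ℝ) (B : Matrix (Fin l) (Fin n) ℝ)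
    (y : Fin m → ℝ) (b : Fin l → ℝ) (ε : ℝ)
    (hbd : ∃ M : ℝ, ∀ x : Fin n → ℝ, sparsest A B y b ε x → ∀ i, |x i| ≤ M)
    (S : Finset (Fin n)) (i : Fin n) :
    ∃ γ : ℝ, 0 < γ ∧ ∀ x : Fin n → ℝ, sparsest A B y b ε x → spt x = S →
      x i ≠ 0 → γ ≤ |x i| := by
  set Λ : Set (Fin n → ℝ) := {x | sparsest A B y b ε x ∧ spt x = S} with hΛ
  by_cases hΛne : Λ.Nonempty
  swap
  · exact ⟨1, one_pos, fun x hx hs _ => absurd ⟨hx, hs⟩ (fun h => hΛne ⟨x, h⟩)⟩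
  obtain ⟨x₀, hx₀⟩ := hΛne
  by_cases hiS : i ∈ S
  swap
  · refine ⟨1, one_pos, fun x hx hs hxi => ?_⟩
    exact absurd (hs ▸ (by simp [spt, hxi] : i ∈ spt x)) hiS
  obtain ⟨M, hM⟩ := hbd
  -- compactness of closure Λ
  have hsub : Λ ⊆ Set.pi Set.univ fun _ : Fin n => Set.Icc (-M) M := by
    intro x hx j _
    have := hM x hx.1 j
    exact abs_le.mp this
  have hKcpt : IsCompact (closure Λ) := by
    have hcpt : IsCompact (Set.pi Set.univ fun _ : Fin n => Set.Icc (-M) M) :=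
      isCompact_univ_pi fun _ => isCompact_Icc
    exact hcpt.of_isClosed_subset isClosed_closure
      (closure_minimal hsub (isClosed_set_pi fun _ _ => isClosed_Icc))
  -- every point of closure Λ has x i ≠ 0
  have hnz : ∀ x ∈ closure Λ, x i ≠ 0 := by
    intro x hx
    have hfeas : feasible A B y b ε x := by
      have : closure Λ ⊆ {z | feasible A B y b ε z} :=
        closure_minimal (fun z hz => hz.1.1) (feasible_closed A B y b ε)
      exact this hx
    have hzero : ∀ j ∉ S, x j = 0 := by
      intro j hj
      have hcl : closure Λ ⊆ {z : Fin n → ℝ | z j = 0} := by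
        refine closure_minimal (fun z hz => ?_) (isClosed_eq (continuous_apply j) continuous_const)
        by_contra hzj
        exact hj (hz.2 ▸ (by simpa [spt] using hzj : j ∈ spt z))
      exact hcl hx
    have hss : spt x ⊆ S := fun j hj => by
      by_contra hjS
      exact (by simpa [spt] using hj : x j ≠ 0) (hzero j hjS)
    have hcard : S.card ≤ (spt x).card := by
      have h0 : l0 x₀ = S.card := by rw [← hx₀.2]; rfl
      have := hx₀.1.2 x hfeas
      rw [h0] at this
      exact this
    have : spt x = S := Finset.eq_of_subset_of_card_le hss hcard
    intro h0
    exact (by simpa [spt, h0] using (this ▸ hiS : i ∈ spt x))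
  -- minimize |x i| over compact closure Λ
  have hKne : (closure Λ).Nonempty := ⟨x₀, subset_closure hx₀⟩
  obtain ⟨z, hz, hzmin⟩ := hKcpt.exists_isMinOn hKne
    ((continuous_apply i).abs.continuousOn)
  refine ⟨|z i|, abs_pos.mpr (hnz z hz), fun x hx hs _ => ?_⟩
  exact hzmin (subset_closure (⟨hx, hs⟩ : x ∈ Λ))

/-- if the set Λ of sparsest solutions is nonempty and bounded, the
absolute values of nonzero entries of its members are bounded below by a positive
constant γ*. -/
theorem stmt9 {m l n : ℕ} (A : Matrix (Fin m) (Fin n) ℝ) (B : Matrix (Fin l) (Fin n) ℝ)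
    (y : Fin m → ℝ) (b : Fin l → ℝ) (ε : ℝ) (hε : 0 ≤ ε)
    (hne : ∃ x : Fin n → ℝ, sparsest A B y b ε x)
    (hbd : ∃ M : ℝ, ∀ x : Fin n → ℝ, sparsest A B y b ε x → ∀ i, |x i| ≤ M) :
    ∃ γ : ℝ, 0 < γ ∧ ∀ x : Fin n → ℝ, sparsest A B y b ε x →
      ∀ i, x i ≠ 0 → γ ≤ |x i| := by
  rcases Nat.eq_zero_or_pos n with hn | hn
  · subst hn; exact ⟨1, one_pos, fun x _ i => i.elim0⟩
  have hnonempty : Nonempty (Finset (Fin n) × Fin n) := ⟨(∅, ⟨0, hn⟩)⟩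
  choose γf hγpos hγ using key A B y b ε hbd
  refine ⟨Finset.univ.inf' (univ_nonempty) (fun p : Finset (Fin n) × Fin n => γf p.1 p.2),
    ?_, ?_⟩
  · rw [Finset.lt_inf'_iff]
    exact fun p _ => hγpos p.1 p.2
  · intro x hx i hxi
    calc _ ≤ γf (spt x) i := Finset.inf'_le _ (Finset.mem_univ (spt x, i))
    _ ≤ |x i| := hγ (spt x) i x hx rfl hxi
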